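/- Fix n ≥ 2 and u with n^6 ≤ u ≤ n^C for some constant C, and let X ⊆ {0,...,u-1} with |X| = n. Let a be uniform on (0,1) and let F(a) be as above. Then with probability at least 1 − 1/n, all distinct pairs x, y ∈ X satisfy x ≢ y (mod F(a)). -/

import Mathlib

open MeasureTheory

/-- `k` claims `a`: `a` is at most `1/(nu)` above a reduced fraction with
denominator `k`. -/
def claims (n u k : ℕ) (a : ℝ) : Prop :=
  ∃ c : ℕ, Nat.Coprime c k ∧ (c : ℝ) / k ≤ a ∧ a ≤ (c : ℝ) / k + 1 / ((n : ℝ) * u)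

/-- `F(a) = k`: `k` is the least positive integer claiming `a`. -/
def FvalEq (n u : ℕ) (a : ℝ) (k : ℕ) : Prop :=
  claims n u k a ∧ ∀ j : ℕ, 0 < j → j < k → ¬claims n u j a

section Aux

open Real Finset

lemma linarith_pow_aux (ε : ℝ) (hε : 0 < ε) (k : ℕ) :
    (k + 1 : ℝ) ≤ max 1 (1 / (ε * Real.log 2)) * (2 : ℝ) ^ (ε * k) := by
  have hlog2 : 0 < Real.log 2 := Real.log_pos (by norm_num)
  set c := max 1 (1 / (ε * Real.log 2)) with hc
  have hc1 : (1:ℝ) ≤ c := le_max_left _ _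
  have hc2 : 1 / (ε * Real.log 2) ≤ c := le_max_right _ _
  have hexp : (2:ℝ) ^ (ε * k) = Real.exp (Real.log 2 * (ε * k)) :=
    Real.rpow_def_of_pos (by norm_num) _
  have hge : 1 + Real.log 2 * (ε * k) ≤ (2:ℝ) ^ (ε * k) := by
    rw [hexp]; have := Real.add_one_le_exp (Real.log 2 * (ε * k)); linarith
  have hk0 : (0:ℝ) ≤ (k:ℝ) := Nat.cast_nonneg k
  have key : 1 ≤ c * (ε * Real.log 2) := by
    rw [div_le_iff₀ (by positivity)] at hc2
    nlinarith
  nlinarith [mul_le_mul_of_nonneg_left hge (by linarith : (0:ℝ) ≤ c)]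

lemma rpow_pow_comm (x : ℝ) (hx : 0 ≤ x) (ε : ℝ) (k : ℕ) :
    (x ^ k) ^ ε = (x ^ ε) ^ k := by
  rw [← Real.rpow_natCast x k, ← Real.rpow_mul hx, mul_comm, Real.rpow_mul hx,
    Real.rpow_natCast]

lemma tau_le_rpow (ε : ℝ) (hε : 0 < ε) :
    ∃ C : ℝ, 1 ≤ C ∧ ∀ d : ℕ, 0 < d → (d.divisors.card : ℝ) ≤ C * (d : ℝ) ^ ε := by
  classical
  set c := max 1 (1 / (ε * Real.log 2)) with hcdef
  have hc1 : (1:ℝ) ≤ c := le_max_left _ _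
  set P := ⌈(2:ℝ) ^ (1/ε)⌉₊ with hP
  refine ⟨c ^ (P + 1), one_le_pow₀ hc1, ?_⟩
  intro d hd
  have hfac : ∀ p ∈ d.primeFactors,
      ((d.factorization p + 1 : ℕ) : ℝ) ≤
        (if p ≤ P then c else 1) * (((p ^ d.factorization p : ℕ) : ℝ)) ^ ε := by
    intro p hp
    have hprime : p.Prime := Nat.prime_of_mem_primeFactors hp
    have hp2 : (2:ℝ) ≤ (p:ℝ) := by exact_mod_cast hprime.two_le
    have hp0 : (0:ℝ) ≤ (p:ℝ) := by linarith
    set k := d.factorization p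
    have hbase : (((p ^ k : ℕ) : ℝ)) ^ ε = ((p:ℝ) ^ ε) ^ k := by
      push_cast; exact rpow_pow_comm _ hp0 _ _
    rw [hbase]
    by_cases hpP : p ≤ P
    · simp only [hpP, if_true]
      have h2 : (2:ℝ) ^ (ε * k) = ((2:ℝ) ^ ε) ^ k := by
        rw [mul_comm, Real.rpow_mul (by norm_num), Real.rpow_natCast]
        exact rpow_pow_comm 2 (by norm_num) ε k
      have h3 : ((2:ℝ) ^ ε) ^ k ≤ ((p:ℝ) ^ ε) ^ k :=
        pow_le_pow_left₀ (Real.rpow_nonneg (by norm_num) _)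
          (Real.rpow_le_rpow (by norm_num) hp2 hε.le) k
      have := linarith_pow_aux ε hε k
      rw [h2] at this
      push_cast
      calc (k:ℝ) + 1 ≤ c * ((2:ℝ) ^ ε) ^ k := this
        _ ≤ c * ((p:ℝ) ^ ε) ^ k := by
            exact mul_le_mul_of_nonneg_left h3 (by linarith)
    · simp only [hpP, if_false, one_mul]
      push_neg at hpP
      have hPp : (2:ℝ) ^ (1/ε) ≤ (p:ℝ) := by
        calc (2:ℝ) ^ (1/ε) ≤ (P:ℕ) := Nat.le_ceil _
          _ ≤ (p:ℝ) := by exact_mod_cast hpP.le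
      have h2 : (2:ℝ) ≤ (p:ℝ) ^ ε := by
        have := Real.rpow_le_rpow (Real.rpow_nonneg (by norm_num) _) hPp hε.le
        rwa [← Real.rpow_mul (by norm_num), one_div_mul_cancel hε.ne', Real.rpow_one] at this
      have h3 : ((2:ℝ)) ^ k ≤ ((p:ℝ) ^ ε) ^ k :=
        pow_le_pow_left₀ (by norm_num) h2 k
      have h4 : (k + 1 : ℝ) ≤ (2:ℝ) ^ k := by
        have := Nat.lt_two_pow_self (n := k)
        have : (k + 1 : ℕ) ≤ 2 ^ k := this
        exact_mod_cast this
      push_cast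
      linarith
  have hcard : (d.divisors.card : ℝ) =
      ∏ p ∈ d.primeFactors, ((d.factorization p + 1 : ℕ) : ℝ) := by
    rw [Nat.card_divisors hd.ne', Nat.cast_prod]
  have hprod : (d : ℝ) = ∏ p ∈ d.primeFactors, (((p ^ d.factorization p : ℕ) : ℝ)) := by
    conv_lhs => rw [← Nat.factorization_prod_pow_eq_self hd.ne']
    unfold Finsupp.prod
    rw [Nat.support_factorization]
    push_cast
    rfl
  calc (d.divisors.card : ℝ)
      = ∏ p ∈ d.primeFactors, ((d.factorization p + 1 : ℕ) : ℝ) := hcard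
    _ ≤ ∏ p ∈ d.primeFactors,
          ((if p ≤ P then c else 1) * (((p ^ d.factorization p : ℕ) : ℝ)) ^ ε) :=
        Finset.prod_le_prod (fun i _ => by positivity) hfac
    _ = (∏ p ∈ d.primeFactors, if p ≤ P then c else 1) *
          ∏ p ∈ d.primeFactors, (((p ^ d.factorization p : ℕ) : ℝ)) ^ ε :=
        Finset.prod_mul_distrib
    _ ≤ c ^ (P + 1) * (d : ℝ) ^ ε := by
        have e1 : ∏ p ∈ d.primeFactors, (((p ^ d.factorization p : ℕ) : ℝ)) ^ ε
            = (d : ℝ) ^ ε := by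
          rw [Real.finset_prod_rpow _ _ (fun i _ => by positivity) ε, ← hprod]
        rw [e1]
        have e2 : (∏ p ∈ d.primeFactors, if p ≤ P then c else 1) ≤ c ^ (P + 1) := by
          rw [← Finset.prod_filter]
          rw [Finset.prod_const]
          have hsub : (d.primeFactors.filter (fun p => p ≤ P)).card ≤ P + 1 := by
            have : d.primeFactors.filter (fun p => p ≤ P) ⊆ Finset.range (P + 1) := by
              intro x hx
              simp only [Finset.mem_filter] at hx
              exact Finset.mem_range.2 (Nat.lt_succ_of_le hx.2)
            exact (Finset.card_le_card this).trans (by simp)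
          exact pow_le_pow_right₀ hc1 hsub
        exact mul_le_mul_of_nonneg_right e2 (Real.rpow_nonneg (Nat.cast_nonneg d) ε)

end Aux

lemma vol_claims_le (n u k : ℕ) (hk : 1 ≤ k) :
    volume {a ∈ Set.Ioo (0:ℝ) 1 | claims n u k a} ≤
      (k : ENNReal) * ENNReal.ofReal (1 / ((n : ℝ) * u)) := by
  have hsub : {a ∈ Set.Ioo (0:ℝ) 1 | claims n u k a} ⊆
      ⋃ c ∈ Finset.range k, Set.Icc ((c:ℝ)/k) ((c:ℝ)/k + 1/((n:ℝ)*u)) := by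
    rintro a ⟨⟨ha0, ha1⟩, c, _, h1, h2⟩
    have hkpos : (0:ℝ) < k := by exact_mod_cast hk
    have hck : (c:ℝ) < k := by
      by_contra h
      push_neg at h
      have : (1:ℝ) ≤ (c:ℝ)/k := (one_le_div hkpos).2 h
      linarith
    have : c < k := by exact_mod_cast hck
    exact Set.mem_biUnion (Finset.mem_range.mpr this) ⟨h1, h2⟩
  calc volume {a ∈ Set.Ioo (0:ℝ) 1 | claims n u k a}
      ≤ volume (⋃ c ∈ Finset.range k, Set.Icc ((c:ℝ)/k) ((c:ℝ)/k + 1/((n:ℝ)*u))) :=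
        measure_mono hsub
    _ ≤ ∑ c ∈ Finset.range k, volume (Set.Icc ((c:ℝ)/k) ((c:ℝ)/k + 1/((n:ℝ)*u))) :=
        measure_biUnion_finset_le _ _
    _ = ∑ c ∈ Finset.range k, ENNReal.ofReal (1/((n:ℝ)*u)) := by
        refine Finset.sum_congr rfl fun c _ => ?_
        rw [Real.volume_Icc]
        ring_nf
    _ = (k : ENNReal) * ENNReal.ofReal (1 / ((n : ℝ) * u)) := by
        rw [Finset.sum_const, Finset.card_range, nsmul_eq_mul]

lemma farey_step (k c : ℕ) (hk : 2 ≤ k) (hcop : Nat.Coprime c k) :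
    ∃ q p : ℕ, 0 < q ∧ q < k ∧ Nat.Coprime p q ∧ p * k = c * q + 1 := by
  haveI : NeZero k := ⟨by omega⟩
  haveI : Fact (1 < k) := ⟨by omega⟩
  set z : ZMod k := -(c : ZMod k)⁻¹ with hz
  have hdvd : k ∣ c * z.val + 1 := by
    rw [← ZMod.natCast_eq_zero_iff]
    push_cast
    rw [ZMod.natCast_zmod_val, hz, mul_neg, ZMod.coe_mul_inv_eq_one c hcop]
    ring
  refine ⟨z.val, (c * z.val + 1) / k, ?_, z.val_lt, ?_, Nat.div_mul_cancel hdvd⟩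
  · rcases Nat.eq_zero_or_pos z.val with h0 | h0
    · exfalso
      rw [ZMod.val_eq_zero, hz, neg_eq_zero] at h0
      have h1 := ZMod.coe_mul_inv_eq_one c hcop
      rw [h0, mul_zero] at h1
      exact zero_ne_one h1
    · exact h0
  · have heq := Nat.div_mul_cancel hdvd
    set p := (c * z.val + 1) / k
    set q := z.val
    have h1 : Nat.gcd p q ∣ c * q + 1 := heq ▸ (Nat.gcd_dvd_left p q).mul_right k
    have h2 : Nat.gcd p q ∣ c * q := (Nat.gcd_dvd_right p q).mul_left c
    have hg : Nat.gcd p q ∣ 1 := by have := Nat.dvd_sub h1 h2; simpa using this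
    exact Nat.dvd_one.mp hg

lemma farey_inj (k q c₁ c₂ p₁ p₂ : ℕ) (h1 : p₁ * k = c₁ * q + 1) (h2 : p₂ * k = c₂ * q + 1)
    (hc₁ : c₁ < k) (hc₂ : c₂ < k) : c₁ = c₂ := by
  have hqk : Nat.gcd k q = 1 := by
    have h5 : Nat.gcd k q ∣ c₁ * q + 1 := h1 ▸ (Nat.gcd_dvd_left k q).mul_left _
    have h6 : Nat.gcd k q ∣ c₁ * q := (Nat.gcd_dvd_right k q).mul_left c₁
    exact Nat.dvd_one.mp (by have := Nat.dvd_sub h5 h6; simpa using this)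
  have hme : c₁ * q ≡ c₂ * q [MOD k] := by
    have e1 : c₁ * q + 1 ≡ 0 [MOD k] := Nat.modEq_zero_iff_dvd.2 ⟨p₁, by rw [← h1]; ring⟩
    have e2 : c₂ * q + 1 ≡ 0 [MOD k] := Nat.modEq_zero_iff_dvd.2 ⟨p₂, by rw [← h2]; ring⟩
    exact Nat.ModEq.add_right_cancel' 1 (e1.trans e2.symm)
  exact (Nat.ModEq.cancel_right_of_coprime hqk hme).eq_of_lt_of_lt hc₁ hc₂

lemma vol_FvalEq_le (n u k : ℕ) (hk : 2 ≤ k) :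
    volume {a ∈ Set.Ioo (0:ℝ) 1 | FvalEq n u a k} ≤
      ENNReal.ofReal ((1 + Real.log k) / k) := by
  classical
  have hkpos : (0:ℝ) < k := by exact_mod_cast Nat.lt_of_lt_of_le Nat.zero_lt_two hk
  have H : ∀ c : ℕ, ∃ qp : ℕ × ℕ, Nat.Coprime c k →
      0 < qp.1 ∧ qp.1 < k ∧ Nat.Coprime qp.2 qp.1 ∧ qp.2 * k = c * qp.1 + 1 := by
    intro c
    by_cases h : Nat.Coprime c k
    · obtain ⟨q, p, h1, h2, h3, h4⟩ := farey_step k c hk h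
      exact ⟨(q, p), fun _ => ⟨h1, h2, h3, h4⟩⟩
    · exact ⟨(1, 0), fun hc => absurd hc h⟩
  choose qp hqp using H
  set C := (Finset.range k).filter (fun c => Nat.Coprime c k) with hC
  have hsub : {a ∈ Set.Ioo (0:ℝ) 1 | FvalEq n u a k} ⊆
      ⋃ c ∈ C, Set.Icc ((c:ℝ)/k) ((c:ℝ)/k + 1/((k:ℝ) * (qp c).1)) := by
    rintro a ⟨⟨ha0, ha1⟩, ⟨c, hcop, h1, h2⟩, hmin⟩
    have hck : (c:ℝ) < k := by
      by_contra h
      push_neg at h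
      have : (1:ℝ) ≤ (c:ℝ)/k := (one_le_div hkpos).2 h
      linarith
    have hckn : c < k := by exact_mod_cast hck
    have hcC : c ∈ C := Finset.mem_filter.2 ⟨Finset.mem_range.2 hckn, hcop⟩
    obtain ⟨hq0, hqk, hpq, heq⟩ := hqp c hcop
    have hqpos : (0:ℝ) < ((qp c).1 : ℝ) := by exact_mod_cast hq0
    have hval : ((qp c).2 : ℝ) / ((qp c).1 : ℝ) = (c:ℝ)/k + 1/((k:ℝ) * (qp c).1) := by
      have hcast : ((qp c).2 : ℝ) * k = (c:ℝ) * (qp c).1 + 1 := by exact_mod_cast heq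
      field_simp
      linear_combination hcast
    have hle : a ≤ ((qp c).2 : ℝ) / ((qp c).1 : ℝ) := by
      by_contra hgt
      push_neg at hgt
      refine hmin (qp c).1 hq0 hqk ⟨(qp c).2, hpq, hgt.le, ?_⟩
      have hfrac : (c:ℝ)/k ≤ ((qp c).2 : ℝ) / ((qp c).1 : ℝ) := by
        rw [hval]
        have : (0:ℝ) ≤ 1/((k:ℝ) * (qp c).1) := by positivity
        linarith
      linarith
    exact Set.mem_biUnion hcC ⟨h1, by rw [← hval]; exact hle⟩
  have hsum : ∑ c ∈ C, (1:ℝ)/((k:ℝ) * (qp c).1) ≤ (1 + Real.log k) / k := by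
    have hinj : ∀ c₁ ∈ C, ∀ c₂ ∈ C, (qp c₁).1 = (qp c₂).1 → c₁ = c₂ := by
      intro c₁ hc₁ c₂ hc₂ hq
      obtain ⟨hm₁, hcop₁⟩ := Finset.mem_filter.1 hc₁
      obtain ⟨hm₂, hcop₂⟩ := Finset.mem_filter.1 hc₂
      obtain ⟨_, _, _, e₁⟩ := hqp c₁ hcop₁
      obtain ⟨_, _, _, e₂⟩ := hqp c₂ hcop₂
      rw [hq] at e₁
      exact farey_inj k (qp c₂).1 c₁ c₂ (qp c₁).2 (qp c₂).2 e₁ e₂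
        (Finset.mem_range.1 hm₁) (Finset.mem_range.1 hm₂)
    have step1 : ∑ c ∈ C, (1:ℝ)/((k:ℝ) * (qp c).1)
        = ∑ t ∈ C.image (fun c => (qp c).1), (1:ℝ)/((k:ℝ) * t) :=
      (Finset.sum_image (f := fun t : ℕ => (1:ℝ)/((k:ℝ) * t)) (g := fun c => (qp c).1) hinj).symm
    have step2 : ∑ t ∈ C.image (fun c => (qp c).1), (1:ℝ)/((k:ℝ) * t)
        ≤ ∑ t ∈ Finset.Ico 1 k, (1:ℝ)/((k:ℝ) * t) := by
      refine Finset.sum_le_sum_of_subset_of_nonneg ?_ (fun t _ _ => by positivity)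
      intro t ht
      obtain ⟨c, hcC', rfl⟩ := Finset.mem_image.1 ht
      obtain ⟨hq0, hqk, _, _⟩ := hqp c (Finset.mem_filter.1 hcC').2
      exact Finset.mem_Ico.2 ⟨hq0, hqk⟩
    have step3 : ∑ t ∈ Finset.Ico 1 k, (1:ℝ)/((k:ℝ) * t)
        = (∑ t ∈ Finset.Ico 1 k, (1:ℝ)/(t:ℝ)) / k := by
      rw [Finset.sum_div]
      refine Finset.sum_congr rfl fun t _ => ?_
      rw [div_div]
      ring_nf
    have step4 : ∑ t ∈ Finset.Ico 1 k, (1:ℝ)/(t:ℝ) ≤ 1 + Real.log k := by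
      have hh := harmonic_le_one_add_log (k - 1)
      have hIcc : Finset.Ico 1 k = Finset.Icc 1 (k - 1) := by
        rw [← Finset.Ico_add_one_right_eq_Icc]
        congr 1
        omega
      have hcast : ((harmonic (k-1) : ℚ) : ℝ) = ∑ t ∈ Finset.Ico 1 k, (1:ℝ)/(t:ℝ) := by
        rw [harmonic_eq_sum_Icc, hIcc]
        push_cast
        refine Finset.sum_congr rfl fun t _ => ?_
        rw [one_div]
      have hlog : Real.log ((k-1 : ℕ) : ℝ) ≤ Real.log k := by
        apply Real.log_le_log
        · have : 1 ≤ k - 1 := by omega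
          exact_mod_cast this
        · exact_mod_cast Nat.sub_le k 1
      rw [← hcast]
      linarith
    rw [step1]
    calc ∑ t ∈ C.image (fun c => (qp c).1), (1:ℝ)/((k:ℝ) * t)
        ≤ ∑ t ∈ Finset.Ico 1 k, (1:ℝ)/((k:ℝ) * t) := step2
      _ = (∑ t ∈ Finset.Ico 1 k, (1:ℝ)/(t:ℝ)) / k := step3
      _ ≤ (1 + Real.log k) / k := by gcongr
  calc volume {a ∈ Set.Ioo (0:ℝ) 1 | FvalEq n u a k}
      ≤ volume (⋃ c ∈ C, Set.Icc ((c:ℝ)/k) ((c:ℝ)/k + 1/((k:ℝ) * (qp c).1))) :=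
        measure_mono hsub
    _ ≤ ∑ c ∈ C, volume (Set.Icc ((c:ℝ)/k) ((c:ℝ)/k + 1/((k:ℝ) * (qp c).1))) :=
        measure_biUnion_finset_le _ _
    _ = ∑ c ∈ C, ENNReal.ofReal ((1:ℝ)/((k:ℝ) * (qp c).1)) := by
        refine Finset.sum_congr rfl fun c _ => ?_
        rw [Real.volume_Icc]
        ring_nf
    _ = ENNReal.ofReal (∑ c ∈ C, (1:ℝ)/((k:ℝ) * (qp c).1)) :=
        (ENNReal.ofReal_sum_of_nonneg (fun c _ => by positivity)).symm
    _ ≤ ENNReal.ofReal ((1 + Real.log k) / k) := ENNReal.ofReal_le_ofReal hsum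

lemma vol_FvalEq_le_sqrt (n u k : ℕ) (hn : 1 ≤ n) (hu : 2 ≤ u) (hk : 2 ≤ k) (hku : k ≤ u) :
    volume {a ∈ Set.Ioo (0:ℝ) 1 | FvalEq n u a k} ≤
      ENNReal.ofReal (Real.sqrt ((1 + Real.log u) / ((n:ℝ) * u))) := by
  have hnu : (0:ℝ) < (n:ℝ) * u := by
    have h1 : (0:ℝ) < (n:ℝ) := by exact_mod_cast hn
    have h2 : (0:ℝ) < (u:ℝ) := by positivity
    positivity
  have hkR : (0:ℝ) < (k:ℝ) := by exact_mod_cast Nat.lt_of_lt_of_le Nat.zero_lt_two hk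
  set A := (k:ℝ) * (1/((n:ℝ)*u)) with hA
  set B := (1 + Real.log k)/(k:ℝ) with hB
  have hA0 : 0 ≤ A := by positivity
  have hlogk0 : 0 ≤ Real.log k := Real.log_nonneg (by exact_mod_cast hk.trans' (by norm_num))
  have hB0 : 0 ≤ B := by positivity
  have bound1 : volume {a ∈ Set.Ioo (0:ℝ) 1 | FvalEq n u a k} ≤ ENNReal.ofReal A := by
    have hsub : {a ∈ Set.Ioo (0:ℝ) 1 | FvalEq n u a k} ⊆
        {a ∈ Set.Ioo (0:ℝ) 1 | claims n u k a} := fun a ⟨h1, h2⟩ => ⟨h1, h2.1⟩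
    calc volume {a ∈ Set.Ioo (0:ℝ) 1 | FvalEq n u a k}
        ≤ volume {a ∈ Set.Ioo (0:ℝ) 1 | claims n u k a} := measure_mono hsub
      _ ≤ (k : ENNReal) * ENNReal.ofReal (1 / ((n : ℝ) * u)) :=
          vol_claims_le n u k (by omega)
      _ = ENNReal.ofReal A := by
          rw [hA, ENNReal.ofReal_mul (by positivity), ENNReal.ofReal_natCast]
  have bound2 : volume {a ∈ Set.Ioo (0:ℝ) 1 | FvalEq n u a k} ≤ ENNReal.ofReal B :=
    vol_FvalEq_le n u k hk
  have hmin : volume {a ∈ Set.Ioo (0:ℝ) 1 | FvalEq n u a k} ≤ ENNReal.ofReal (min A B) := by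
    rcases min_cases A B with ⟨h, _⟩ | ⟨h, _⟩ <;> rw [h]
    · exact bound1
    · exact bound2
  refine hmin.trans (ENNReal.ofReal_le_ofReal ?_)
  have hAB : A * B = (1 + Real.log k) / ((n:ℝ)*u) := by
    rw [hA, hB]
    field_simp
  have hmin_sqrt : min A B ≤ Real.sqrt (A * B) := by
    have h0 : 0 ≤ min A B := le_min hA0 hB0
    rw [Real.le_sqrt h0 (by positivity)]
    nlinarith [min_le_left A B, min_le_right A B]
  refine hmin_sqrt.trans ?_
  rw [hAB]
  apply Real.sqrt_le_sqrt
  rw [div_le_div_iff_of_pos_right hnu]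
  have : Real.log k ≤ Real.log u := Real.log_le_log hkR (by exact_mod_cast hku)
  linarith

/-- For `n` sufficiently large, `n^6 ≤ u ≤ n^K`, and any `n`-element
`X ⊆ {0,...,u-1}`: with probability at least `1 − 1/n` over `a` uniform on
`(0,1)`, no two distinct elements of `X` are congruent modulo `F(a)`. -/
def goodPred (n u : ℕ) (X : Finset ℕ) (a : ℝ) : Prop :=
  ∀ k : ℕ, FvalEq n u a k → ∀ x ∈ X, ∀ y ∈ X, x ≠ y → ¬(x ≡ y [MOD k])

theorem stmt_14 (K : ℕ) : ∃ N : ℕ, ∀ n : ℕ, N ≤ n → ∀ u : ℕ, n ^ 6 ≤ u → u ≤ n ^ K →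
    ∀ X : Finset ℕ, X ⊆ Finset.range u → X.card = n →
    ENNReal.ofReal (1 - 1 / (n : ℝ)) ≤
      volume {a ∈ Set.Ioo (0 : ℝ) 1 |
        ∀ k : ℕ, FvalEq n u a k → ∀ x ∈ X, ∀ y ∈ X, x ≠ y → ¬(x ≡ y [MOD k])} := by
  classical
  set ε' : ℝ := 1/(4*((K:ℝ)+1)) with hε'def
  have hε'pos : 0 < ε' := by positivity
  obtain ⟨Cd, hCd1, hCd⟩ := tau_le_rpow ε' hε'pos
  refine ⟨⌈(20 * Cd^2 * ((K:ℝ)+1))^4⌉₊ + 2, ?_⟩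
  intro n hN u hu6 huK X hXsub hXcard
  have hn2 : 2 ≤ n := le_trans (by omega) hN
  have hx0 : (0:ℝ) < n := by positivity
  have hx1 : (1:ℝ) ≤ n := by exact_mod_cast hn2.trans' (by norm_num)
  have hu2 : 2 ≤ u := by
    have h26 : 2^6 ≤ n^6 := Nat.pow_le_pow_left hn2 6
    omega
  have hu0 : (0:ℝ) < u := by
    have : (0:ℕ) < u := by omega
    exact_mod_cast this
  have hu1 : (1:ℝ) ≤ u := by exact_mod_cast hu2.trans' (by norm_num)
  have hnu : (0:ℝ) < (n:ℝ)*u := by positivity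
  set S := Real.sqrt ((1 + Real.log u) / ((n:ℝ)*u)) with hSdef
  show ENNReal.ofReal (1 - 1 / (n : ℝ)) ≤
    volume {a ∈ Set.Ioo (0:ℝ) 1 | goodPred n u X a}
  set bad := {a ∈ Set.Ioo (0:ℝ) 1 | ¬ goodPred n u X a} with hbaddef
  set D := (Finset.Ico 2 u).filter
    (fun k => ∃ x ∈ X, ∃ y ∈ X, x ≠ y ∧ x ≡ y [MOD k]) with hDdef
  -- bad is covered
  have hbadsub : bad ⊆ ({a ∈ Set.Ioo (0:ℝ) 1 | claims n u 1 a} ∪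
      ⋃ k ∈ D, {a ∈ Set.Ioo (0:ℝ) 1 | FvalEq n u a k}) := by
    rintro a ⟨haI, hna⟩
    rw [goodPred] at hna
    push_neg at hna
    obtain ⟨k, hF, x, hx, y, hy, hxy, hmod⟩ := hna
    match k with
    | 0 =>
      exfalso
      have : x = y := by simpa [Nat.ModEq, Nat.mod_zero] using hmod
      exact hxy this
    | 1 =>
      exact Or.inl ⟨haI, hF.1⟩
    | (m+2) =>
      refine Or.inr (Set.mem_biUnion ?_ ⟨haI, hF⟩)
      have hxu : x < u := Finset.mem_range.1 (hXsub hx)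
      have hyu : y < u := Finset.mem_range.1 (hXsub hy)
      have hku : m + 2 < u := by
        rcases Nat.lt_or_ge x y with hlt | hge
        · have hdvd : (m+2) ∣ y - x := (Nat.modEq_iff_dvd' hlt.le).1 hmod
          have := Nat.le_of_dvd (by omega) hdvd
          omega
        · have hlt : y < x := by omega
          have hdvd : (m+2) ∣ x - y := (Nat.modEq_iff_dvd' hlt.le).1 hmod.symm
          have := Nat.le_of_dvd (by omega) hdvd
          omega
      exact Finset.mem_filter.2 ⟨Finset.mem_Ico.2 ⟨by omega, hku⟩, x, hx, y, hy, hxy, hmod⟩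
  -- per-k bound
  have hmeasD : ∀ k ∈ D, volume {a ∈ Set.Ioo (0:ℝ) 1 | FvalEq n u a k} ≤ ENNReal.ofReal S := by
    intro k hk
    obtain ⟨hk1, _⟩ := Finset.mem_filter.1 hk
    obtain ⟨hk2, hk3⟩ := Finset.mem_Ico.1 hk1
    exact vol_FvalEq_le_sqrt n u k (by omega) hu2 hk2 hk3.le
  -- cardinality of D
  have hcardD : ((D.card : ℝ)) ≤ (n:ℝ)^2 * (Cd * (u:ℝ) ^ ε') := by
    have hsub2 : D ⊆ (X ×ˢ X).biUnion (fun p => (p.1 - p.2).divisors) := by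
      intro k hk
      obtain ⟨hk1, x, hx, y, hy, hxy, hmod⟩ := Finset.mem_filter.1 hk
      obtain ⟨hk2, hk3⟩ := Finset.mem_Ico.1 hk1
      rcases Nat.lt_or_ge x y with hlt | hge
      · refine Finset.mem_biUnion.2 ⟨(y, x), Finset.mem_product.2 ⟨hy, hx⟩, ?_⟩
        exact Nat.mem_divisors.2 ⟨(Nat.modEq_iff_dvd' hlt.le).1 hmod, by omega⟩
      · have hlt : y < x := by omega
        refine Finset.mem_biUnion.2 ⟨(x, y), Finset.mem_product.2 ⟨hx, hy⟩, ?_⟩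
        exact Nat.mem_divisors.2 ⟨(Nat.modEq_iff_dvd' hlt.le).1 hmod.symm, by omega⟩
    have hcard1 : D.card ≤ ∑ p ∈ X ×ˢ X, (p.1 - p.2).divisors.card :=
      le_trans (Finset.card_le_card hsub2) (Finset.card_biUnion_le)
    have hterm : ∀ p ∈ X ×ˢ X, ((p.1 - p.2).divisors.card : ℝ) ≤ Cd * (u:ℝ) ^ ε' := by
      intro p hp
      obtain ⟨hp1, hp2⟩ := Finset.mem_product.1 hp
      rcases Nat.eq_zero_or_pos (p.1 - p.2) with h0 | h0
      · rw [h0]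
        simp only [Nat.divisors_zero, Finset.card_empty, Nat.cast_zero]
        positivity
      · refine (hCd _ h0).trans ?_
        have hdu : ((p.1 - p.2 : ℕ):ℝ) ≤ (u:ℝ) := by
          have : p.1 - p.2 ≤ u := le_of_lt (by
            have := Finset.mem_range.1 (hXsub hp1)
            omega)
          exact_mod_cast this
        exact mul_le_mul_of_nonneg_left
          (Real.rpow_le_rpow (Nat.cast_nonneg _) hdu hε'pos.le) (by linarith)
    calc ((D.card : ℝ)) ≤ ((∑ p ∈ X ×ˢ X, (p.1 - p.2).divisors.card : ℕ) : ℝ) := by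
          exact_mod_cast hcard1
      _ = ∑ p ∈ X ×ˢ X, (((p.1 - p.2).divisors.card : ℕ) : ℝ) := by push_cast; rfl
      _ ≤ ∑ _p ∈ X ×ˢ X, Cd * (u:ℝ) ^ ε' := Finset.sum_le_sum hterm
      _ = (n:ℝ)^2 * (Cd * (u:ℝ) ^ ε') := by
          rw [Finset.sum_const, Finset.card_product, hXcard, nsmul_eq_mul]
          push_cast
          ring
  -- the arithmetic inequality
  have hL0 : 0 ≤ Real.log u := Real.log_nonneg hu1
  set r := (n:ℝ) ^ ((1:ℝ)/4) with hrdef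
  have hr0 : 0 < r := Real.rpow_pos_of_pos hx0 _
  have hr1 : 1 ≤ r := by
    have := Real.rpow_le_rpow_of_exponent_le hx1 (by norm_num : (0:ℝ) ≤ 1/4)
    rwa [Real.rpow_zero] at this
  have hr4 : r^(4:ℕ) = (n:ℝ) := by
    rw [hrdef, ← Real.rpow_natCast ((n:ℝ) ^ ((1:ℝ)/4)) 4, ← Real.rpow_mul hx0.le]
    norm_num
  have hn6 : (n:ℝ)^(6:ℕ) ≤ (u:ℝ) := by exact_mod_cast hu6
  have hKn : (u:ℝ) ≤ (n:ℝ)^(K:ℕ) := by exact_mod_cast huK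
  have hUe : (u:ℝ)^ε' ≤ r := by
    have h1 : (u:ℝ)^ε' ≤ ((n:ℝ)^(K:ℕ))^ε' :=
      Real.rpow_le_rpow hu0.le hKn hε'pos.le
    have h2 : ((n:ℝ)^(K:ℕ))^ε' = (n:ℝ)^((K:ℝ)*ε') := by
      rw [← Real.rpow_natCast (n:ℝ) K, ← Real.rpow_mul hx0.le]
    have h3 : (K:ℝ)*ε' ≤ 1/4 := by
      rw [hε'def, mul_one_div, div_le_div_iff₀ (by positivity) (by norm_num)]
      ring_nf
      nlinarith [Nat.cast_nonneg (α := ℝ) K]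
    refine h1.trans ?_
    rw [h2]
    exact Real.rpow_le_rpow_of_exponent_le hx1 h3
  have hLr : 1 + Real.log u ≤ 5*((K:ℝ)+1)*r := by
    have hlu : Real.log u ≤ (K:ℝ) * Real.log n := by
      have := Real.log_le_log hu0 hKn
      rwa [Real.log_pow] at this
    have hln : Real.log n ≤ 4 * r := by
      have := Real.log_le_rpow_div (Nat.cast_nonneg n) (by norm_num : (0:ℝ) < 1/4)
      rw [hrdef]
      linarith [this]
    have hK0 : (0:ℝ) ≤ K := Nat.cast_nonneg K
    nlinarith [mul_le_mul_of_nonneg_left hln hK0]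
  have hCr : 20*Cd^2*((K:ℝ)+1) ≤ r := by
    have hceil : ⌈(20 * Cd^2 * ((K:ℝ)+1))^4⌉₊ ≤ n := by omega
    have h1 : ((20 * Cd^2 * ((K:ℝ)+1))^4 : ℝ) ≤ (n:ℝ) := by
      calc ((20 * Cd^2 * ((K:ℝ)+1))^4 : ℝ) ≤ (⌈(20 * Cd^2 * ((K:ℝ)+1))^4⌉₊ : ℝ) :=
            Nat.le_ceil _
        _ ≤ (n:ℝ) := by exact_mod_cast hceil
    have h2 : (20*Cd^2*((K:ℝ)+1))^(4:ℕ) ≤ r^(4:ℕ) := by rw [hr4]; exact h1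
    exact le_of_pow_le_pow_left₀ (by norm_num) hr0.le h2
  have key : 4*(n:ℝ)^(6:ℕ)*Cd^2*((u:ℝ)^ε')^2*(1 + Real.log u) ≤ (n:ℝ)*u := by
    have hU2 : ((u:ℝ)^ε')^2 ≤ r^2 :=
      pow_le_pow_left₀ (Real.rpow_nonneg hu0.le _) hUe 2
    calc 4*(n:ℝ)^(6:ℕ)*Cd^2*((u:ℝ)^ε')^2*(1 + Real.log u)
        ≤ 4*(n:ℝ)^(6:ℕ)*Cd^2*(r^2)*(5*((K:ℝ)+1)*r) := by
          have hc1 : 0 ≤ 4*(n:ℝ)^(6:ℕ)*Cd^2 := by positivity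
          have e1 : 4*(n:ℝ)^(6:ℕ)*Cd^2*((u:ℝ)^ε')^2*(1 + Real.log u) ≤
              4*(n:ℝ)^(6:ℕ)*Cd^2*(r^2)*(1 + Real.log u) := by
            apply mul_le_mul_of_nonneg_right _ (by linarith)
            exact mul_le_mul_of_nonneg_left hU2 hc1
          refine e1.trans ?_
          apply mul_le_mul_of_nonneg_left hLr (by positivity)
      _ = (20*Cd^2*((K:ℝ)+1)) * ((n:ℝ)^(6:ℕ) * r^3) := by ring
      _ ≤ r * ((n:ℝ)^(6:ℕ) * r^3) := by
          apply mul_le_mul_of_nonneg_right hCr (by positivity)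
      _ = (n:ℝ)^(6:ℕ) * r^(4:ℕ) := by ring
      _ = (n:ℝ)^(6:ℕ) * n := by rw [hr4]
      _ ≤ (u:ℝ) * n := mul_le_mul_of_nonneg_right hn6 hx0.le
      _ = (n:ℝ)*u := by ring
  have harith : 1/((n:ℝ)*u) + ((n:ℝ)^2 * (Cd * (u:ℝ) ^ ε')) * S ≤ 1/(n:ℝ) := by
    have hu2R : (2:ℝ) ≤ u := by exact_mod_cast hu2
    have parta : 1/((n:ℝ)*u) ≤ 1/(2*(n:ℝ)) := by
      apply one_div_le_one_div_of_le (by positivity)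
      nlinarith
    have hUpos : (0:ℝ) < (u:ℝ)^ε' := Real.rpow_pos_of_pos hu0 _
    set T := 2*(n:ℝ)^3*Cd*((u:ℝ)^ε') with hTdef
    have hT0 : 0 < T := by positivity
    have hST : S ≤ 1/T := by
      rw [hSdef]
      have h1 : (1 + Real.log u) / ((n:ℝ)*u) ≤ (1/T)^2 := by
        have hTsq : (1/T)^2 = 1/(4*(n:ℝ)^(6:ℕ)*Cd^2*((u:ℝ)^ε')^2) := by
          rw [hTdef]; ring
        rw [hTsq, div_le_div_iff₀ hnu (by positivity)]
        calc (1 + Real.log u) * (4*(n:ℝ)^(6:ℕ)*Cd^2*((u:ℝ)^ε')^2)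
            = 4*(n:ℝ)^(6:ℕ)*Cd^2*((u:ℝ)^ε')^2*(1 + Real.log u) := by ring
          _ ≤ (n:ℝ)*u := key
          _ = 1*((n:ℝ)*u) := (one_mul _).symm
      calc Real.sqrt ((1 + Real.log u) / ((n:ℝ)*u)) ≤ Real.sqrt ((1/T)^2) :=
            Real.sqrt_le_sqrt h1
        _ = 1/T := Real.sqrt_sq (by positivity)
    have partb : ((n:ℝ)^2 * (Cd * (u:ℝ) ^ ε')) * S ≤ 1/(2*(n:ℝ)) := by
      have h1 : ((n:ℝ)^2 * (Cd * (u:ℝ) ^ ε')) * S ≤ ((n:ℝ)^2 * (Cd * (u:ℝ) ^ ε')) * (1/T) :=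
        mul_le_mul_of_nonneg_left hST (by positivity)
      refine h1.trans_eq ?_
      rw [hTdef]
      field_simp
    have hhalf : 1/(2*(n:ℝ)) + 1/(2*(n:ℝ)) = 1/(n:ℝ) := by
      field_simp
      norm_num
    linarith
  -- assemble
  have hvolbad : volume bad ≤ ENNReal.ofReal (1/(n:ℝ)) := by
    have t1 : volume {a ∈ Set.Ioo (0:ℝ) 1 | claims n u 1 a} ≤
        ENNReal.ofReal (1/((n:ℝ)*u)) := by
      have := vol_claims_le n u 1 le_rfl
      simpa using this
    have t2 : volume (⋃ k ∈ D, {a ∈ Set.Ioo (0:ℝ) 1 | FvalEq n u a k}) ≤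
        ENNReal.ofReal (((n:ℝ)^2 * (Cd * (u:ℝ) ^ ε')) * S) := by
      calc volume (⋃ k ∈ D, {a ∈ Set.Ioo (0:ℝ) 1 | FvalEq n u a k})
          ≤ ∑ k ∈ D, volume {a ∈ Set.Ioo (0:ℝ) 1 | FvalEq n u a k} :=
            measure_biUnion_finset_le _ _
        _ ≤ ∑ _k ∈ D, ENNReal.ofReal S := Finset.sum_le_sum hmeasD
        _ = (D.card : ENNReal) * ENNReal.ofReal S := by
            rw [Finset.sum_const, nsmul_eq_mul]
        _ = ENNReal.ofReal ((D.card : ℝ) * S) := by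
            rw [ENNReal.ofReal_mul (Nat.cast_nonneg _), ENNReal.ofReal_natCast]
        _ ≤ ENNReal.ofReal (((n:ℝ)^2 * (Cd * (u:ℝ) ^ ε')) * S) := by
            apply ENNReal.ofReal_le_ofReal
            exact mul_le_mul_of_nonneg_right hcardD (Real.sqrt_nonneg _)
    calc volume bad ≤ volume ({a ∈ Set.Ioo (0:ℝ) 1 | claims n u 1 a} ∪
          ⋃ k ∈ D, {a ∈ Set.Ioo (0:ℝ) 1 | FvalEq n u a k}) := measure_mono hbadsub
      _ ≤ volume {a ∈ Set.Ioo (0:ℝ) 1 | claims n u 1 a} +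
          volume (⋃ k ∈ D, {a ∈ Set.Ioo (0:ℝ) 1 | FvalEq n u a k}) := measure_union_le _ _
      _ ≤ ENNReal.ofReal (1/((n:ℝ)*u)) +
          ENNReal.ofReal (((n:ℝ)^2 * (Cd * (u:ℝ) ^ ε')) * S) := add_le_add t1 t2
      _ = ENNReal.ofReal (1/((n:ℝ)*u) + ((n:ℝ)^2 * (Cd * (u:ℝ) ^ ε')) * S) :=
          (ENNReal.ofReal_add (by positivity) (by positivity)).symm
      _ ≤ ENNReal.ofReal (1/(n:ℝ)) := ENNReal.ofReal_le_ofReal harith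
  have hIoo : Set.Ioo (0:ℝ) 1 ⊆ {a ∈ Set.Ioo (0:ℝ) 1 | goodPred n u X a} ∪ bad := by
    intro a ha
    by_cases h : goodPred n u X a
    · exact Or.inl ⟨ha, h⟩
    · exact Or.inr ⟨ha, h⟩
  calc ENNReal.ofReal (1 - 1/(n:ℝ))
      = 1 - ENNReal.ofReal (1/(n:ℝ)) := by
        rw [← ENNReal.ofReal_one, ← ENNReal.ofReal_sub _ (by positivity)]
    _ ≤ volume {a ∈ Set.Ioo (0:ℝ) 1 | goodPred n u X a} := by
        rw [tsub_le_iff_right]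
        calc (1:ENNReal) = volume (Set.Ioo (0:ℝ) 1) := by
              rw [Real.volume_Ioo]; norm_num
          _ ≤ volume ({a ∈ Set.Ioo (0:ℝ) 1 | goodPred n u X a} ∪ bad) := measure_mono hIoo
          _ ≤ volume {a ∈ Set.Ioo (0:ℝ) 1 | goodPred n u X a} + volume bad := measure_union_le _ _
          _ ≤ volume {a ∈ Set.Ioo (0:ℝ) 1 | goodPred n u X a} + ENNReal.ofReal (1/(n:ℝ)) :=
              add_le_add_right hvolbad _
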